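/- Combining the two directions: in the network N_k, the minimum cost of an integral flow of value k equals the minimum of w_D(E) over all subsets E ⊆ D with |E| = k. Hence min over k ∈ {1,…,|D|} of the minimum cost of N_k equals min over nonempty E ⊆ D of w_D(E), and an optimal subset of D with respect to Δ = {A→B, B→A} can be recovered from an optimal flow. -/

import Mathlib

attribute [local instance] Classical.propDecidable

open Finset

/-- Number of unordered pairs of distinct facts of `E` violating `viol`. -/
noncomputable def numVio {F : Type*} [DecidableEq F] (viol : F → F → Prop)
    (E : Finset F) : ℕ :=
  ((E.powersetCard 2).filter (fun p => ∀ f ∈ p, ∀ g ∈ p, f ≠ g → viol f g)).card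

/-- Nodes of the flow network `N_k`: source `s`, auxiliary node `sp = s'`,
sink `t`, left copies `vAi a i` and left block nodes `vA a`, right block nodes
`uB b` and right copies `uBi b i` (the index `i : Fin n` stands for `i+1`). -/
inductive FNode (α β : Type*) (n : ℕ) where
  | s | sp | t
  | vAi (a : α) (i : Fin n)
  | vA (a : α)
  | uB (b : β)
  | uBi (b : β) (i : Fin n)
  deriving DecidableEq, Fintype

variable {α β : Type*} [DecidableEq α] [DecidableEq β]

/-- `#_{D.A}(a)`, the number of facts of `D` with `A`-value `a`. -/
def cntA (D : Finset (α × β)) (a : α) : ℕ := (D.filter (fun f => f.1 = a)).card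

/-- `#_{D.B}(b)`. -/
def cntB (D : Finset (α × β)) (b : β) : ℕ := (D.filter (fun f => f.2 = b)).card

/-- Edge capacities of `N_k`: `(s,s')` has capacity `k`, all other edges capacity 1. -/
def capN (D : Finset (α × β)) (k : ℕ) :
    FNode α β D.card → FNode α β D.card → ℕ
  | .s, .sp => k
  | .sp, .vAi a i => if i.val < cntA D a then 1 else 0
  | .vAi a i, .vA a' => if a = a' ∧ i.val < cntA D a then 1 else 0
  | .vA a, .uB b => if (a, b) ∈ D then 1 else 0
  | .uB b, .uBi b' i => if b = b' ∧ i.val < cntB D b then 1 else 0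
  | .uBi b i, .t => if i.val < cntB D b then 1 else 0
  | _, _ => 0

/-- Edge costs of `N_k`: `(v_a^{i+1}, v_a)` costs `i·w₁`, `(v_a,u_b)` costs `−w f`
for the fact `f = (a,b)`, `(u_b, u_b^{i+1})` costs `i·w₂`; all other edges cost 0. -/
noncomputable def ecostN (D : Finset (α × β)) (w : α × β → ℚ) (w1 w2 : ℚ) :
    FNode α β D.card → FNode α β D.card → ℚ
  | .vAi a i, .vA a' => if a = a' then (i.val : ℚ) * w1 else 0
  | .vA a, .uB b => if (a, b) ∈ D then -w (a, b) else 0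
  | .uB b, .uBi b' i => if b = b' then (i.val : ℚ) * w2 else 0
  | _, _ => 0

/-- An integral flow on `N_k`: capacities respected and flow conserved at every
node other than the source and the sink. -/
def IsFlow [Fintype α] [Fintype β] (D : Finset (α × β)) (k : ℕ)
    (g : FNode α β D.card → FNode α β D.card → ℕ) : Prop :=
  (∀ u v, g u v ≤ capN D k u v) ∧
  (∀ v : FNode α β D.card, v ≠ FNode.s → v ≠ FNode.t →
    (∑ u, g u v) = ∑ u, g v u)

/-- The value of a flow. -/
def flowValue [Fintype α] [Fintype β] {n : ℕ}
    (g : FNode α β n → FNode α β n → ℕ) : ℕ :=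
  ∑ v, g FNode.s v

/-- The cost of a flow: `Σ_e g(e)·c(e)`. -/
noncomputable def flowCost [Fintype α] [Fintype β] (D : Finset (α × β))
    (w : α × β → ℚ) (w1 w2 : ℚ)
    (g : FNode α β D.card → FNode α β D.card → ℕ) : ℚ :=
  ∑ u, ∑ v, (g u v : ℚ) * ecostN D w w1 w2 u v

/-- `w_D(E)` for `Δ = {A→B, B→A}` with weights `w₁, w₂`. -/
noncomputable def wDAB (w : α × β → ℚ) (w1 w2 : ℚ) (E : Finset (α × β)) : ℚ :=
  (∑ f ∈ E, -(w f)) +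
    w1 * (numVio (fun f g => f.1 = g.1 ∧ f.2 ≠ g.2) E : ℚ) +
    w2 * (numVio (fun f g => f.2 = g.2 ∧ f.1 ≠ g.1) E : ℚ)

/-- The flow `f_E` induced by a subset `E ⊆ D`. -/
def fE (D E : Finset (α × β)) :
    FNode α β D.card → FNode α β D.card → ℕ
  | .s, .sp => E.card
  | .sp, .vAi a i => if i.val < cntA E a then 1 else 0
  | .vAi a i, .vA a' => if a = a' ∧ i.val < cntA E a then 1 else 0
  | .vA a, .uB b => if (a, b) ∈ E then 1 else 0
  | .uB b, .uBi b' i => if b = b' ∧ i.val < cntB E b then 1 else 0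
  | .uBi b i, .t => if i.val < cntB E b then 1 else 0
  | _, _ => 0

set_option linter.unusedSectionVars false
set_option linter.unusedVariables false

section Helpers

def fnodeEquiv {α β : Type*} {n : ℕ} :
    FNode α β n ≃ (Unit ⊕ Unit ⊕ Unit ⊕ α × Fin n ⊕ α ⊕ β ⊕ β × Fin n) where
  toFun x := match x with
    | .s => .inl ()
    | .sp => .inr (.inl ())
    | .t => .inr (.inr (.inl ()))
    | .vAi a i => .inr (.inr (.inr (.inl (a, i))))
    | .vA a => .inr (.inr (.inr (.inr (.inl a))))
    | .uB b => .inr (.inr (.inr (.inr (.inr (.inl b)))))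
    | .uBi b i => .inr (.inr (.inr (.inr (.inr (.inr (b, i))))))
  invFun x := match x with
    | .inl () => .s
    | .inr (.inl ()) => .sp
    | .inr (.inr (.inl ())) => .t
    | .inr (.inr (.inr (.inl (a, i)))) => .vAi a i
    | .inr (.inr (.inr (.inr (.inl a)))) => .vA a
    | .inr (.inr (.inr (.inr (.inr (.inl b))))) => .uB b
    | .inr (.inr (.inr (.inr (.inr (.inr (b, i)))))) => .uBi b i
  left_inv x := by cases x <;> rfl
  right_inv x := by rcases x with _ | _ | _ | ⟨a, i⟩ | _ | _ | ⟨b, i⟩ <;> rfl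

theorem sum_fnode {α β : Type*} [Fintype α] [Fintype β] {n : ℕ} {M : Type*}
    [AddCommMonoid M] (f : FNode α β n → M) :
    ∑ u, f u = f .s + f .sp + f .t + (∑ a, ∑ i, f (.vAi a i)) +
      (∑ a, f (.vA a)) + (∑ b, f (.uB b)) + (∑ b, ∑ i, f (.uBi b i)) := by
  rw [← fnodeEquiv.symm.sum_comp f]
  simp [Fintype.sum_sum_type, Fintype.sum_prod_type, fnodeEquiv, add_assoc]

theorem choose_two_eq_sum_range (m : ℕ) : m.choose 2 = ∑ i ∈ range m, i := by
  rw [Finset.sum_range_id, Nat.choose_two_right]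

theorem sum_range_le_sum_of_card (m : ℕ) :
    ∀ S : Finset ℕ, m ≤ S.card → ∑ i ∈ range m, i ≤ ∑ i ∈ S, i := by
  induction m with
  | zero => simp
  | succ m ih =>
    intro S hS
    have hne : S.Nonempty := card_pos.mp (by omega)
    have hmax := S.max'_mem hne
    have hSsub : S ⊆ range (S.max' hne + 1) := by
      intro x hx
      simp only [mem_range]
      exact Nat.lt_succ_of_le (S.le_max' x hx)
    have hcard : m + 1 ≤ S.max' hne + 1 := by
      calc m + 1 ≤ S.card := hS
        _ ≤ (range (S.max' hne + 1)).card := card_le_card hSsub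
        _ = S.max' hne + 1 := by simp
    have h1 : ∑ i ∈ range m, i ≤ ∑ i ∈ S.erase (S.max' hne), i := by
      apply ih
      rw [card_erase_of_mem hmax]; omega
    have : ∑ i ∈ S, i = S.max' hne + ∑ i ∈ S.erase (S.max' hne), i :=
      (add_sum_erase S id hmax).symm
    rw [Finset.sum_range_succ, this]
    omega


theorem sum_fin_indicator {n m : ℕ} (h : m ≤ n) :
    ∑ i : Fin n, (if i.val < m then (1:ℕ) else 0) = m := by
  rw [Fin.sum_univ_eq_sum_range (fun i => if i < m then (1:ℕ) else 0)]
  rw [← Finset.sum_subset (Finset.range_subset_range.mpr h)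
    (fun x _ hx => by simp [Finset.mem_range] at hx ⊢; omega)]
  rw [Finset.sum_ite_of_true (fun i hi => Finset.mem_range.mp hi)]
  simp

theorem sum_fin_cost {n m : ℕ} (h : m ≤ n) (c : ℚ) :
    ∑ i : Fin n, (if i.val < m then ((i:ℕ):ℚ) * c else 0) = c * m.choose 2 := by
  rw [Fin.sum_univ_eq_sum_range (fun i => if i < m then ((i:ℕ):ℚ) * c else 0)]
  rw [← Finset.sum_subset (Finset.range_subset_range.mpr h)
    (fun x _ hx => by simp [Finset.mem_range] at hx ⊢; omega)]
  rw [Finset.sum_ite_of_true (fun i hi => Finset.mem_range.mp hi)]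
  rw [← Finset.sum_mul, choose_two_eq_sum_range]
  push_cast
  ring

theorem numVio_eq_sum_choose {F γ : Type*} [DecidableEq F] [DecidableEq γ] [Fintype γ]
    (key : F → γ) (viol : F → F → Prop)
    (hv : ∀ f g, f ≠ g → (viol f g ↔ key f = key g)) (E : Finset F) :
    numVio viol E = ∑ a : γ, ((E.filter (fun f => key f = a)).card).choose 2 := by
  unfold numVio
  have hset : (E.powersetCard 2).filter
        (fun p => ∀ f ∈ p, ∀ g ∈ p, f ≠ g → viol f g)
      = univ.biUnion (fun a : γ => (E.filter (fun f => key f = a)).powersetCard 2) := by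
    ext p
    simp only [mem_filter, mem_powersetCard, mem_biUnion, mem_univ, true_and]
    constructor
    · rintro ⟨⟨hpE, hcard⟩, hvio⟩
      obtain ⟨f₀, hf₀⟩ := card_pos.mp (by omega : 0 < p.card)
      refine ⟨key f₀, fun g hg => ?_, hcard⟩
      rw [mem_filter]
      refine ⟨hpE hg, ?_⟩
      by_cases hfg : g = f₀
      · rw [hfg]
      · exact (hv g f₀ hfg).mp (hvio g hg f₀ hf₀ hfg)
    · rintro ⟨a, hsub, hcard⟩
      refine ⟨⟨hsub.trans (filter_subset _ _), hcard⟩, fun f hf g hg hfg => ?_⟩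
      have hf1 := (mem_filter.mp (hsub hf)).2
      have hg1 := (mem_filter.mp (hsub hg)).2
      exact (hv f g hfg).mpr (hf1.trans hg1.symm)
  rw [hset, card_biUnion]
  · exact Finset.sum_congr rfl (fun a _ => card_powersetCard 2 _)
  · intro a _ a' _ haa'
    rw [Function.onFun_apply, Finset.disjoint_left]
    intro p hp hp'
    rw [mem_powersetCard] at hp hp'
    obtain ⟨f₀, hf₀⟩ := card_pos.mp (by omega : 0 < p.card)
    exact haa' (((mem_filter.mp (hp.1 hf₀)).2.symm).trans (mem_filter.mp (hp'.1 hf₀)).2)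

theorem cntA_mono {E D : Finset (α × β)} (h : E ⊆ D) (a : α) : cntA E a ≤ cntA D a :=
  card_le_card (filter_subset_filter _ h)
theorem cntB_mono {E D : Finset (α × β)} (h : E ⊆ D) (b : β) : cntB E b ≤ cntB D b :=
  card_le_card (filter_subset_filter _ h)
theorem cntA_le_card (E : Finset (α × β)) (a : α) : cntA E a ≤ E.card := card_filter_le _ _
theorem cntB_le_card (E : Finset (α × β)) (b : β) : cntB E b ≤ E.card := card_filter_le _ _

theorem sum_cntA [Fintype α] (E : Finset (α × β)) : ∑ a : α, cntA E a = E.card :=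
  (Finset.card_eq_sum_card_fiberwise (f := Prod.fst) (t := univ)
    (fun x _ => mem_univ _)).symm

theorem sum_cntB [Fintype β] (E : Finset (α × β)) : ∑ b : β, cntB E b = E.card :=
  (Finset.card_eq_sum_card_fiberwise (f := Prod.snd) (t := univ)
    (fun x _ => mem_univ _)).symm

theorem card_filter_snd [Fintype β] (E : Finset (α × β)) (a : α) :
    (univ.filter (fun b => (a, b) ∈ E)).card = cntA E a := by
  unfold cntA
  refine (Finset.card_bij (fun f _ => f.2) ?_ ?_ ?_).symm
  · intro f hf
    obtain ⟨hfE, hf1⟩ := mem_filter.mp hf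
    simp only [mem_filter, mem_univ, true_and]
    rwa [show (a, f.2) = f from Prod.ext hf1.symm rfl]
  · intro f hf g hg hfg
    exact Prod.ext ((mem_filter.mp hf).2.trans (mem_filter.mp hg).2.symm) hfg
  · intro b hb
    exact ⟨(a, b), mem_filter.mpr ⟨(mem_filter.mp hb).2, rfl⟩, rfl⟩

theorem card_filter_fst [Fintype α] (E : Finset (α × β)) (b : β) :
    (univ.filter (fun a => (a, b) ∈ E)).card = cntB E b := by
  unfold cntB
  refine (Finset.card_bij (fun f _ => f.1) ?_ ?_ ?_).symm
  · intro f hf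
    obtain ⟨hfE, hf1⟩ := mem_filter.mp hf
    simp only [mem_filter, mem_univ, true_and]
    rwa [show (f.1, b) = f from Prod.ext rfl hf1.symm]
  · intro f hf g hg hfg
    exact Prod.ext hfg ((mem_filter.mp hf).2.trans (mem_filter.mp hg).2.symm)
  · intro a ha
    exact ⟨(a, b), mem_filter.mpr ⟨(mem_filter.mp ha).2, rfl⟩, rfl⟩


theorem cntA_le_n {E D : Finset (α × β)} (hE : E ⊆ D) (a : α) : cntA E a ≤ D.card :=
  le_trans (cntA_mono hE a) (cntA_le_card D a)
theorem cntB_le_n {E D : Finset (α × β)} (hE : E ⊆ D) (b : β) : cntB E b ≤ D.card :=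
  le_trans (cntB_mono hE b) (cntB_le_card D b)

theorem fE_isFlow [Fintype α] [Fintype β] {D E : Finset (α × β)} (hE : E ⊆ D)
    {k : ℕ} (hk : E.card ≤ k) : IsFlow D k (fE D E) := by
  constructor
  · intro u v
    cases u <;> cases v <;> simp only [fE, capN] <;> try exact le_refl _
    · exact hk
    · next a i =>
      have := cntA_mono hE a; split_ifs <;> omega
    · next a i a' =>
      split_ifs with h1 h2 <;> try omega
      exact absurd ⟨h1.1, lt_of_lt_of_le h1.2 (cntA_mono hE a)⟩ h2
    · next a b =>
      split_ifs with h1 h2 <;> simp_all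
      exact h2 (hE h1)
    · next b b' i =>
      split_ifs with h1 h2 <;> try omega
      exact absurd ⟨h1.1, lt_of_lt_of_le h1.2 (cntB_mono hE b)⟩ h2
    · next b i =>
      have := cntB_mono hE b; split_ifs <;> omega
  · intro v hs ht
    have hA : ∀ a, ∑ i : Fin D.card, (if i.val < cntA E a then 1 else 0) = cntA E a :=
      fun a => sum_fin_indicator (cntA_le_n hE a)
    have hB : ∀ b, ∑ i : Fin D.card, (if i.val < cntB E b then 1 else 0) = cntB E b :=
      fun b => sum_fin_indicator (cntB_le_n hE b)
    cases v with
    | s => exact absurd rfl hs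
    | t => exact absurd rfl ht
    | sp =>
      rw [sum_fnode, sum_fnode]
      simp only [fE, ite_and, Finset.sum_ite_eq, Finset.sum_const_zero, add_zero, zero_add,
        Finset.mem_univ, if_true]
      simp [hA, sum_cntA]
    | vAi a i =>
      rw [sum_fnode, sum_fnode]
      simp [fE, ite_and, Finset.sum_ite_eq, Finset.sum_ite_eq']
    | vA a =>
      rw [sum_fnode, sum_fnode]
      simp only [fE, ite_and, Finset.sum_ite_eq, Finset.sum_ite_eq', Finset.sum_const_zero,
        add_zero, zero_add, Finset.mem_univ, if_true, Finset.sum_boole]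
      simp [hA, card_filter_snd]
    | uB b =>
      rw [sum_fnode, sum_fnode]
      simp only [fE, ite_and, Finset.sum_ite_eq, Finset.sum_ite_eq', Finset.sum_const_zero,
        add_zero, zero_add, Finset.mem_univ, if_true, Finset.sum_boole]
      simp [hB, card_filter_fst]
    | uBi b i =>
      rw [sum_fnode, sum_fnode]
      simp [fE, ite_and, Finset.sum_ite_eq, Finset.sum_ite_eq']


theorem ite_ite_same {γ : Type*} {p : Prop} [Decidable p] (a b : γ) :
    (if p then (if p then a else b) else b) = if p then a else b := by
  split <;> rfl

theorem numVioA_eq [Fintype α] (E : Finset (α × β)) :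
    (numVio (fun f g => f.1 = g.1 ∧ f.2 ≠ g.2) E) = ∑ a : α, (cntA E a).choose 2 :=
  numVio_eq_sum_choose Prod.fst _
    (fun f g hfg => ⟨fun h => h.1, fun h => ⟨h, fun h2 => hfg (Prod.ext h h2)⟩⟩) E

theorem numVioB_eq [Fintype β] (E : Finset (α × β)) :
    (numVio (fun f g => f.2 = g.2 ∧ f.1 ≠ g.1) E) = ∑ b : β, (cntB E b).choose 2 :=
  numVio_eq_sum_choose Prod.snd _
    (fun f g hfg => ⟨fun h => h.1, fun h => ⟨h, fun h2 => hfg (Prod.ext h2 h)⟩⟩) E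

theorem sum_ite_mid [Fintype α] [Fintype β] {D E : Finset (α × β)} (hE : E ⊆ D)
    (w : α × β → ℚ) :
    (∑ a : α, ∑ b : β, if (a, b) ∈ D then (if (a, b) ∈ E then -w (a, b) else 0) else 0)
      = ∑ f ∈ E, -(w f) := by
  have h1 : ∀ (a : α) (b : β),
      (if (a, b) ∈ D then (if (a, b) ∈ E then -w (a, b) else 0) else 0)
        = if (a, b) ∈ E then -w (a, b) else 0 := by
    intro a b
    by_cases h : (a, b) ∈ E
    · simp [h, hE h]
    · rw [if_neg h]; split <;> simp [h]
  simp only [h1]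
  rw [← Finset.sum_product']
  rw [show (univ : Finset α) ×ˢ (univ : Finset β) = (univ : Finset (α × β)) from
    Finset.univ_product_univ]
  rw [Finset.sum_ite_mem, Finset.univ_inter]

theorem fE_value [Fintype α] [Fintype β] (D E : Finset (α × β)) :
    flowValue (fE D E) = E.card := by
  rw [flowValue, sum_fnode]
  simp [fE]

theorem fE_cost [Fintype α] [Fintype β] {D E : Finset (α × β)} (hE : E ⊆ D)
    (w : α × β → ℚ) (w1 w2 : ℚ) :
    flowCost D w w1 w2 (fE D E) = wDAB w w1 w2 E := by
  have hca : ∀ a, ∑ i : Fin D.card, (if i.val < cntA E a then ((i:ℕ):ℚ) * w1 else 0)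
      = w1 * ((cntA E a).choose 2 : ℚ) := fun a => sum_fin_cost (cntA_le_n hE a) w1
  have hcb : ∀ b, ∑ i : Fin D.card, (if i.val < cntB E b then ((i:ℕ):ℚ) * w2 else 0)
      = w2 * ((cntB E b).choose 2 : ℚ) := fun b => sum_fin_cost (cntB_le_n hE b) w2
  have hswap : ∀ (f : β → Fin D.card → ℚ) (b : β),
      (∑ b' : β, ∑ i : Fin D.card, if b = b' then f b' i else 0) = ∑ i, f b i := by
    intro f b
    rw [Finset.sum_comm]
    simp [Finset.sum_ite_eq]
  rw [flowCost, sum_fnode]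
  simp only [sum_fnode, fE, ecostN, ite_and]
  simp only [mul_zero, zero_mul, Finset.sum_const_zero, add_zero, zero_add,
    Finset.sum_ite_eq, Finset.mem_univ, if_true, ite_mul, one_mul, mul_ite,
    Nat.cast_ite, Nat.cast_one, Nat.cast_zero, ite_ite_same]
  simp only [hswap, hca, hcb, sum_ite_mid hE w]
  rw [wDAB, numVioA_eq, numVioB_eq]
  push_cast
  rw [Finset.mul_sum, Finset.mul_sum]
  ring


theorem choose_le_sum_fin {n m : ℕ} (x : Fin n → ℕ) (hx1 : ∀ i, x i ≤ 1)
    (hsum : ∑ i, x i = m) : m.choose 2 ≤ ∑ i : Fin n, x i * i.val := by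
  classical
  set S : Finset (Fin n) := univ.filter (fun i => x i = 1) with hS
  have hxi : ∀ i, x i * i.val = if i ∈ S then i.val else 0 := by
    intro i
    have := hx1 i
    rcases Nat.le_one_iff_eq_zero_or_eq_one.mp this with h | h <;>
      simp [hS, h]
  have hsum2 : ∑ i : Fin n, x i * i.val = ∑ i ∈ S, i.val := by
    rw [Finset.sum_congr rfl (fun i _ => hxi i), Finset.sum_ite_mem,
      Finset.univ_inter]
  have hcard : S.card = m := by
    rw [← hsum]
    rw [Finset.card_filter]
    exact (Finset.sum_congr rfl (fun i _ => by
      have := hx1 i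
      rcases Nat.le_one_iff_eq_zero_or_eq_one.mp this with h | h <;> simp [h])).symm
  have himg : ∑ j ∈ S.image Fin.val, j = ∑ i ∈ S, i.val := by
    rw [Finset.sum_image (fun a _ b _ h => Fin.val_injective h)]
  have hcard2 : (S.image Fin.val).card = m := by
    rw [Finset.card_image_of_injective _ Fin.val_injective, hcard]
  rw [hsum2, ← himg, choose_two_eq_sum_range]
  exact sum_range_le_sum_of_card m _ (le_of_eq hcard2.symm)

theorem sum_swap_ite {γ : Type*} [Fintype γ] [DecidableEq γ] {n : ℕ}
    (f : γ → Fin n → ℚ) (b : γ) :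
    (∑ b' : γ, ∑ i : Fin n, if b = b' then f b' i else 0) = ∑ i, f b i := by
  rw [Finset.sum_comm]
  simp [Finset.sum_ite_eq]

theorem sum_ite_mem_univ2 [Fintype α] [Fintype β] (E : Finset (α × β))
    (φ : α × β → ℚ) :
    (∑ a : α, ∑ b : β, if (a, b) ∈ E then φ (a, b) else 0) = ∑ f ∈ E, φ f := by
  rw [← Finset.sum_product',
    show (univ ×ˢ univ : Finset (α × β)) = univ from Finset.univ_product_univ,
    Finset.sum_ite_mem, Finset.univ_inter]

theorem dir1 [Fintype α] [Fintype β] (D : Finset (α × β)) (w : α × β → ℚ)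
    (w1 w2 : ℚ) (h1 : 0 ≤ w1) (h2 : 0 ≤ w2) (k : ℕ)
    (g : FNode α β D.card → FNode α β D.card → ℕ)
    (hg : IsFlow D k g) (hval : flowValue g = k) :
    ∃ E ⊆ D, E.card = k ∧ wDAB w w1 w2 E ≤ flowCost D w w1 w2 g := by
  obtain ⟨hcap, hcons⟩ := hg
  have hg0 : ∀ u v, capN D k u v = 0 → g u v = 0 :=
    fun u v h => Nat.le_zero.mp (h ▸ hcap u v)
  set E : Finset (α × β) := D.filter (fun f => g (.vA f.1) (.uB f.2) = 1) with hEdef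
  have hED : E ⊆ D := filter_subset _ _
  have hmid : ∀ a b, g (.vA a) (.uB b) = if (a, b) ∈ E then 1 else 0 := by
    intro a b
    by_cases hD : (a, b) ∈ D
    · have hle : g (.vA a) (.uB b) ≤ 1 := by
        have := hcap (.vA a) (.uB b)
        simpa [capN, hD] using this
      by_cases he : g (.vA a) (.uB b) = 1
      · rw [if_pos (mem_filter.mpr ⟨hD, he⟩), he]
      · have hne : (a, b) ∉ E := fun hmem => he (mem_filter.mp hmem).2
        rw [if_neg hne]
        omega
    · have h0 : g (.vA a) (.uB b) = 0 := hg0 _ _ (by simp [capN, hD])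
      rw [h0, if_neg (fun hmem => hD (hED hmem))]
  -- conservation at vAi a i
  have hin_vAi : ∀ a i, (∑ u, g u (.vAi a i)) = g .sp (.vAi a i) := by
    intro a i
    rw [sum_fnode, hg0 .s (.vAi a i) rfl, hg0 .t (.vAi a i) rfl,
      Finset.sum_eq_zero (fun a' (_ : a' ∈ univ) =>
        Finset.sum_eq_zero (fun i' (_ : i' ∈ univ) => hg0 (.vAi a' i') (.vAi a i) rfl)),
      Finset.sum_eq_zero (fun a' (_ : a' ∈ univ) => hg0 (.vA a') (.vAi a i) rfl),
      Finset.sum_eq_zero (fun b (_ : b ∈ univ) => hg0 (.uB b) (.vAi a i) rfl),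
      Finset.sum_eq_zero (fun b (_ : b ∈ univ) =>
        Finset.sum_eq_zero (fun i' (_ : i' ∈ univ) => hg0 (.uBi b i') (.vAi a i) rfl))]
    simp
  have hout_vAi : ∀ a i, (∑ v, g (.vAi a i) v) = g (.vAi a i) (.vA a) := by
    intro a i
    rw [sum_fnode, hg0 (.vAi a i) .s rfl, hg0 (.vAi a i) .sp rfl, hg0 (.vAi a i) .t rfl,
      Finset.sum_eq_zero (fun a' (_ : a' ∈ univ) =>
        Finset.sum_eq_zero (fun i' (_ : i' ∈ univ) => hg0 (.vAi a i) (.vAi a' i') rfl)),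
      Finset.sum_eq_zero (fun b (_ : b ∈ univ) => hg0 (.vAi a i) (.uB b) rfl),
      Finset.sum_eq_zero (fun b (_ : b ∈ univ) =>
        Finset.sum_eq_zero (fun i' (_ : i' ∈ univ) => hg0 (.vAi a i) (.uBi b i') rfl)),
      Finset.sum_eq_single a
        (fun a' _ hne => hg0 (.vAi a i) (.vA a')
          (by simp only [capN, ite_eq_right_iff]
              rintro ⟨heq, -⟩
              exact absurd heq (Ne.symm hne)))
        (fun h => absurd (mem_univ a) h)]
    simp
  have hxsp : ∀ a i, g (.vAi a i) (.vA a) = g .sp (.vAi a i) := by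
    intro a i
    have hc := hcons (.vAi a i) (by simp) (by simp)
    rw [hin_vAi, hout_vAi] at hc
    exact hc.symm
  -- conservation at vA a
  have hin_vA : ∀ a, (∑ u, g u (.vA a)) = ∑ i, g .sp (.vAi a i) := by
    intro a
    rw [sum_fnode, hg0 .s (.vA a) rfl, hg0 .sp (.vA a) rfl, hg0 .t (.vA a) rfl,
      Finset.sum_eq_zero (fun a' (_ : a' ∈ univ) => hg0 (.vA a') (.vA a) rfl),
      Finset.sum_eq_zero (fun b (_ : b ∈ univ) => hg0 (.uB b) (.vA a) rfl),
      Finset.sum_eq_zero (fun b (_ : b ∈ univ) =>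
        Finset.sum_eq_zero (fun i' (_ : i' ∈ univ) => hg0 (.uBi b i') (.vA a) rfl)),
      Finset.sum_eq_single a
        (fun a' _ hne => Finset.sum_eq_zero (fun i _ => hg0 (.vAi a' i) (.vA a)
          (by simp only [capN, ite_eq_right_iff]
              rintro ⟨heq, -⟩
              exact absurd heq hne)))
        (fun h => absurd (mem_univ a) h)]
    simp only [zero_add, add_zero]
    exact Finset.sum_congr rfl (fun i _ => hxsp a i)
  have hout_vA : ∀ a, (∑ v, g (.vA a) v) = cntA E a := by
    intro a
    rw [sum_fnode, hg0 (.vA a) .s rfl, hg0 (.vA a) .sp rfl, hg0 (.vA a) .t rfl,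
      Finset.sum_eq_zero (fun a' (_ : a' ∈ univ) =>
        Finset.sum_eq_zero (fun i' (_ : i' ∈ univ) => hg0 (.vA a) (.vAi a' i') rfl)),
      Finset.sum_eq_zero (fun a' (_ : a' ∈ univ) => hg0 (.vA a) (.vA a') rfl),
      Finset.sum_eq_zero (fun b (_ : b ∈ univ) =>
        Finset.sum_eq_zero (fun i' (_ : i' ∈ univ) => hg0 (.vA a) (.uBi b i') rfl))]
    simp only [zero_add, add_zero]
    rw [Finset.sum_congr rfl (fun b (_ : b ∈ univ) => hmid a b),
      ← Finset.card_filter, card_filter_snd]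
  have hXa : ∀ a, (∑ i, g .sp (.vAi a i)) = cntA E a := by
    intro a
    have hc := hcons (.vA a) (by simp) (by simp)
    rw [hin_vA, hout_vA] at hc
    exact hc
  -- conservation at uBi b i
  have hin_uBi : ∀ b i, (∑ u, g u (.uBi b i)) = g (.uB b) (.uBi b i) := by
    intro b i
    rw [sum_fnode, hg0 .s (.uBi b i) rfl, hg0 .sp (.uBi b i) rfl, hg0 .t (.uBi b i) rfl,
      Finset.sum_eq_zero (fun a' (_ : a' ∈ univ) =>
        Finset.sum_eq_zero (fun i' (_ : i' ∈ univ) => hg0 (.vAi a' i') (.uBi b i) rfl)),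
      Finset.sum_eq_zero (fun a' (_ : a' ∈ univ) => hg0 (.vA a') (.uBi b i) rfl),
      Finset.sum_eq_zero (fun b' (_ : b' ∈ univ) =>
        Finset.sum_eq_zero (fun i' (_ : i' ∈ univ) => hg0 (.uBi b' i') (.uBi b i) rfl)),
      Finset.sum_eq_single b
        (fun b' _ hne => hg0 (.uB b') (.uBi b i)
          (by simp only [capN, ite_eq_right_iff]
              rintro ⟨heq, -⟩
              exact absurd heq hne))
        (fun h => absurd (mem_univ b) h)]
    simp
  have hout_uBi : ∀ b i, (∑ v, g (.uBi b i) v) = g (.uBi b i) .t := by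
    intro b i
    rw [sum_fnode, hg0 (.uBi b i) .s rfl, hg0 (.uBi b i) .sp rfl,
      Finset.sum_eq_zero (fun a' (_ : a' ∈ univ) =>
        Finset.sum_eq_zero (fun i' (_ : i' ∈ univ) => hg0 (.uBi b i) (.vAi a' i') rfl)),
      Finset.sum_eq_zero (fun a' (_ : a' ∈ univ) => hg0 (.uBi b i) (.vA a') rfl),
      Finset.sum_eq_zero (fun b' (_ : b' ∈ univ) => hg0 (.uBi b i) (.uB b') rfl),
      Finset.sum_eq_zero (fun b' (_ : b' ∈ univ) =>
        Finset.sum_eq_zero (fun i' (_ : i' ∈ univ) => hg0 (.uBi b i) (.uBi b' i') rfl))]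
    simp
  have hysp : ∀ b i, g (.uB b) (.uBi b i) = g (.uBi b i) .t := by
    intro b i
    have hc := hcons (.uBi b i) (by simp) (by simp)
    rw [hin_uBi, hout_uBi] at hc
    exact hc
  -- conservation at uB b
  have hin_uB : ∀ b, (∑ u, g u (.uB b)) = cntB E b := by
    intro b
    rw [sum_fnode, hg0 .s (.uB b) rfl, hg0 .sp (.uB b) rfl, hg0 .t (.uB b) rfl,
      Finset.sum_eq_zero (fun a' (_ : a' ∈ univ) =>
        Finset.sum_eq_zero (fun i' (_ : i' ∈ univ) => hg0 (.vAi a' i') (.uB b) rfl)),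
      Finset.sum_eq_zero (fun b' (_ : b' ∈ univ) => hg0 (.uB b') (.uB b) rfl),
      Finset.sum_eq_zero (fun b' (_ : b' ∈ univ) =>
        Finset.sum_eq_zero (fun i' (_ : i' ∈ univ) => hg0 (.uBi b' i') (.uB b) rfl))]
    simp only [zero_add, add_zero]
    rw [Finset.sum_congr rfl (fun a (_ : a ∈ univ) => hmid a b),
      ← Finset.card_filter, card_filter_fst]
  have hout_uB : ∀ b, (∑ v, g (.uB b) v) = ∑ i, g (.uB b) (.uBi b i) := by
    intro b
    rw [sum_fnode, hg0 (.uB b) .s rfl, hg0 (.uB b) .sp rfl, hg0 (.uB b) .t rfl,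
      Finset.sum_eq_zero (fun a' (_ : a' ∈ univ) =>
        Finset.sum_eq_zero (fun i' (_ : i' ∈ univ) => hg0 (.uB b) (.vAi a' i') rfl)),
      Finset.sum_eq_zero (fun a' (_ : a' ∈ univ) => hg0 (.uB b) (.vA a') rfl),
      Finset.sum_eq_zero (fun b' (_ : b' ∈ univ) => hg0 (.uB b) (.uB b') rfl),
      Finset.sum_eq_single b
        (fun b' _ hne => Finset.sum_eq_zero (fun i _ => hg0 (.uB b) (.uBi b' i)
          (by simp only [capN, ite_eq_right_iff]
              rintro ⟨heq, -⟩
              exact absurd heq (Ne.symm hne))))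
        (fun h => absurd (mem_univ b) h)]
    simp
  have hYb : ∀ b, (∑ i, g (.uB b) (.uBi b i)) = cntB E b := by
    intro b
    have hc := hcons (.uB b) (by simp) (by simp)
    rw [hin_uB, hout_uB] at hc
    exact hc.symm
  -- value: |E| = k
  have hEk : E.card = k := by
    have hc := hcons .sp (by simp) (by simp)
    rw [sum_fnode, sum_fnode] at hc
    rw [hg0 .sp (.sp) rfl, hg0 .t (.sp) rfl,
      Finset.sum_eq_zero (fun a' (_ : a' ∈ univ) =>
        Finset.sum_eq_zero (fun i' (_ : i' ∈ univ) => hg0 (.vAi a' i') .sp rfl)),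
      Finset.sum_eq_zero (fun a' (_ : a' ∈ univ) => hg0 (.vA a') .sp rfl),
      Finset.sum_eq_zero (fun b (_ : b ∈ univ) => hg0 (.uB b) .sp rfl),
      Finset.sum_eq_zero (fun b (_ : b ∈ univ) =>
        Finset.sum_eq_zero (fun i' (_ : i' ∈ univ) => hg0 (.uBi b i') .sp rfl)),
      hg0 .sp .s rfl, hg0 .sp .t rfl,
      Finset.sum_eq_zero (fun a' (_ : a' ∈ univ) => hg0 .sp (.vA a') rfl),
      Finset.sum_eq_zero (fun b (_ : b ∈ univ) => hg0 .sp (.uB b) rfl),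
      Finset.sum_eq_zero (fun b (_ : b ∈ univ) =>
        Finset.sum_eq_zero (fun i' (_ : i' ∈ univ) => hg0 .sp (.uBi b i') rfl))] at hc
    simp only [zero_add, add_zero] at hc
    have hvk : g .s .sp = k := by
      rw [flowValue, sum_fnode] at hval
      rw [hg0 .s .s rfl, hg0 .s .t rfl,
        Finset.sum_eq_zero (fun a' (_ : a' ∈ univ) =>
          Finset.sum_eq_zero (fun i' (_ : i' ∈ univ) => hg0 .s (.vAi a' i') rfl)),
        Finset.sum_eq_zero (fun a' (_ : a' ∈ univ) => hg0 .s (.vA a') rfl),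
        Finset.sum_eq_zero (fun b (_ : b ∈ univ) => hg0 .s (.uB b) rfl),
        Finset.sum_eq_zero (fun b (_ : b ∈ univ) =>
          Finset.sum_eq_zero (fun i' (_ : i' ∈ univ) => hg0 .s (.uBi b i') rfl))] at hval
      simpa using hval
    rw [hvk] at hc
    rw [← sum_cntA E, ← Finset.sum_congr rfl (fun a (_ : a ∈ univ) => hXa a), ← hc]
  -- bounds on flow variables
  have hxle : ∀ a (i : Fin D.card), g .sp (.vAi a i) ≤ 1 := by
    intro a i
    refine le_trans (hcap .sp (.vAi a i)) ?_
    simp only [capN]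
    split <;> omega
  have hyle : ∀ b (i : Fin D.card), g (.uB b) (.uBi b i) ≤ 1 := by
    intro b i
    refine le_trans (hcap (.uB b) (.uBi b i)) ?_
    simp only [capN]
    split <;> omega
  -- block bounds
  have hblockA : ∀ a, w1 * ((cntA E a).choose 2 : ℚ) ≤
      ∑ i : Fin D.card, (g .sp (.vAi a i) : ℚ) * (((i : ℕ) : ℚ) * w1) := by
    intro a
    have hnat := choose_le_sum_fin (fun i => g .sp (.vAi a i)) (hxle a) (hXa a)
    calc w1 * ((cntA E a).choose 2 : ℚ)
        ≤ w1 * ((∑ i : Fin D.card, g .sp (.vAi a i) * i.val : ℕ) : ℚ) := by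
          apply mul_le_mul_of_nonneg_left _ h1
          exact_mod_cast hnat
      _ = ∑ i : Fin D.card, (g .sp (.vAi a i) : ℚ) * (((i : ℕ) : ℚ) * w1) := by
          push_cast
          rw [Finset.mul_sum]
          exact Finset.sum_congr rfl (fun i _ => by ring)
  have hblockB : ∀ b, w2 * ((cntB E b).choose 2 : ℚ) ≤
      ∑ i : Fin D.card, (g (.uB b) (.uBi b i) : ℚ) * (((i : ℕ) : ℚ) * w2) := by
    intro b
    have hnat := choose_le_sum_fin (fun i => g (.uB b) (.uBi b i)) (hyle b) (hYb b)
    calc w2 * ((cntB E b).choose 2 : ℚ)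
        ≤ w2 * ((∑ i : Fin D.card, g (.uB b) (.uBi b i) * i.val : ℕ) : ℚ) := by
          apply mul_le_mul_of_nonneg_left _ h2
          exact_mod_cast hnat
      _ = ∑ i : Fin D.card, (g (.uB b) (.uBi b i) : ℚ) * (((i : ℕ) : ℚ) * w2) := by
          push_cast
          rw [Finset.mul_sum]
          exact Finset.sum_congr rfl (fun i _ => by ring)
  -- compute cost
  have hcost : flowCost D w w1 w2 g =
      (∑ a, ∑ i : Fin D.card, (g .sp (.vAi a i) : ℚ) * (((i : ℕ) : ℚ) * w1)) +
      (∑ f ∈ E, -(w f)) +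
      (∑ b, ∑ i : Fin D.card, (g (.uB b) (.uBi b i) : ℚ) * (((i : ℕ) : ℚ) * w2)) := by
    rw [flowCost, sum_fnode]
    simp only [sum_fnode, ecostN, mul_ite, mul_zero, mul_neg,
      Finset.sum_const_zero, add_zero, zero_add, Finset.sum_ite_eq,
      Finset.mem_univ, if_true]
    rw [Finset.sum_congr rfl (fun b (_ : b ∈ univ) =>
      sum_swap_ite (fun b' i => (g (.uB b) (.uBi b' i) : ℚ) * (((i : ℕ) : ℚ) * w2)) b)]
    congr 1
    congr 1
    · exact Finset.sum_congr rfl (fun a _ => Finset.sum_congr rfl (fun i _ => by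
        rw [hxsp a i]))
    · have hpt : ∀ (a : α) (b : β),
          (if (a, b) ∈ D then -((g (.vA a) (.uB b) : ℚ) * w (a, b)) else 0)
            = (if (a, b) ∈ E then -(w (a, b)) else 0) := by
        intro a b
        rw [hmid a b]
        by_cases hmem : (a, b) ∈ E
        · simp [hmem, hED hmem]
        · rw [if_neg hmem]
          split <;> simp
      simp only [hpt]
      exact sum_ite_mem_univ2 E (fun f => -(w f))
  -- conclude
  refine ⟨E, hED, hEk, ?_⟩
  rw [hcost, wDAB, numVioA_eq, numVioB_eq]
  push_cast
  have hA := Finset.sum_le_sum (fun a (_ : a ∈ univ) => hblockA a)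
  have hB := Finset.sum_le_sum (fun b (_ : b ∈ univ) => hblockB b)
  rw [← Finset.mul_sum] at hA hB
  push_cast at hA hB
  linarith


end Helpers

/-- Combining both directions: for every `k` with `1 ≤ k ≤ |D|`, the minimum cost
of an integral flow of value `k` in `N_k` equals the minimum of `w_D(E)` over all
subsets `E ⊆ D` with `|E| = k` (expressed by mutual domination of the two minima).
Consequently, minimizing over all `k` recovers an optimal subset of `D`
w.r.t. `Δ = {A→B, B→A}`. -/
theorem min_flow_cost_eq_min_wD [Fintype α] [Fintype β]
    (D : Finset (α × β)) (w : α × β → ℚ) (w1 w2 : ℚ)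
    (hw : ∀ f ∈ D, 0 ≤ w f) (h1 : 0 ≤ w1) (h2 : 0 ≤ w2)
    (k : ℕ) (hk1 : 1 ≤ k) (hk2 : k ≤ D.card) :
    (∀ g, IsFlow D k g → flowValue g = k →
      ∃ E ⊆ D, E.card = k ∧ wDAB w w1 w2 E ≤ flowCost D w w1 w2 g) ∧
    (∀ E ⊆ D, E.card = k →
      ∃ g, IsFlow D k g ∧ flowValue g = k ∧
        flowCost D w w1 w2 g ≤ wDAB w w1 w2 E) := by
  constructor
  · intro g hg hval
    exact dir1 D w w1 w2 h1 h2 k g hg hval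
  · intro E hE hcard
    exact ⟨fE D E, fE_isFlow hE (le_of_eq hcard), by rw [fE_value, hcard],
      le_of_eq (fE_cost hE w w1 w2)⟩
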